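/- arXiv:2103.04470 — 2 statements merged into one kernel-verified Lean document; each statement's English description precedes it below -/
import Mathlib

section
/- Let x_1, x_2, x_3, x_4 be points in the hyperbolic plane of constant curvature κ < 0, with pairwise distances d_{ij}. If min(d_{13}, d_{24}) > max(d_{12}, d_{23}, d_{34}, d_{41}), then sinh((√(−κ)/2)·min(d_{13},d_{24})) ≤ √2 · sinh((√(−κ)/2)·max(d_{12},d_{23},d_{34},d_{41})). -/
set_option maxHeartbeats 1000000


/-- The Minkowski bilinear form on `ℝ³`: `⟨u, v⟩ = -u₀v₀ + u₁v₁ + u₂v₂`. -/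
def mink (u v : Fin 3 → ℝ) : ℝ :=
  -(u 0 * v 0) + u 1 * v 1 + u 2 * v 2

/-- Inverse hyperbolic cosine. -/
noncomputable def arcosh (x : ℝ) : ℝ :=
  Real.log (x + Real.sqrt (x ^ 2 - 1))

/-- Distance in the hyperboloid model of the hyperbolic plane of curvature `κ < 0`:
`d(x, y) = (1/√(-κ)) · arcosh(κ · ⟨x | y⟩)`. -/
noncomputable def hypDist (κ : ℝ) (u v : Fin 3 → ℝ) : ℝ :=
  (1 / Real.sqrt (-κ)) * arcosh (κ * mink u v)

lemma cosh_arcosh' {t : ℝ} (ht : 1 ≤ t) : Real.cosh (arcosh t) = t := by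
  have h1 : (0:ℝ) ≤ t ^ 2 - 1 := by nlinarith
  have h2 : Real.sqrt (t ^ 2 - 1) ^ 2 = t ^ 2 - 1 := Real.sq_sqrt h1
  have hz : 0 < t + Real.sqrt (t ^ 2 - 1) := by
    have := Real.sqrt_nonneg (t ^ 2 - 1); linarith
  have hmul : (t + Real.sqrt (t ^ 2 - 1)) * (t - Real.sqrt (t ^ 2 - 1)) = 1 := by
    nlinarith [h2]
  rw [arcosh, Real.cosh_log hz, inv_eq_of_mul_eq_one_right hmul]
  ring

lemma arcosh_nonneg' {t : ℝ} (ht : 1 ≤ t) : 0 ≤ arcosh t :=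
  Real.log_nonneg (by have := Real.sqrt_nonneg (t ^ 2 - 1); linarith)

lemma sinh_half_arcosh' {t : ℝ} (ht : 1 ≤ t) :
    Real.sinh (arcosh t / 2) = Real.sqrt ((t - 1) / 2) := by
  have hx : 0 ≤ arcosh t / 2 := by linarith [arcosh_nonneg' ht]
  have hsn : 0 ≤ Real.sinh (arcosh t / 2) := Real.sinh_nonneg_iff.2 hx
  have hc : Real.cosh (arcosh t) = t := cosh_arcosh' ht
  have h2 : Real.sinh (arcosh t / 2) ^ 2 = (t - 1) / 2 := by
    have hdm := Real.cosh_two_mul (arcosh t / 2)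
    have h3 := Real.cosh_sq (arcosh t / 2)
    have h4 : 2 * (arcosh t / 2) = arcosh t := by ring
    rw [h4, hc] at hdm
    nlinarith [hdm, h3]
  rw [← h2, Real.sqrt_sq hsn]

/-- Projection of a hyperboloid point to the Poincaré disc (rescaled). -/
noncomputable def qpt (κ : ℝ) (u : Fin 3 → ℝ) : EuclideanSpace ℝ (Fin 2) :=
  !₂[Real.sqrt (-κ) * u 1 / (1 + Real.sqrt (-κ) * u 0),
    Real.sqrt (-κ) * u 2 / (1 + Real.sqrt (-κ) * u 0)]

/-- Conformal factor. -/
noncomputable def cfac (κ : ℝ) (u : Fin 3 → ℝ) : ℝ :=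
  Real.sqrt ((1 + Real.sqrt (-κ) * u 0) / 2)

lemma pair_key (κ : ℝ) (hκ : κ < 0) (u v : Fin 3 → ℝ)
    (hu : mink u u = 1 / κ) (hu0 : 0 < u 0) (hv : mink v v = 1 / κ) (hv0 : 0 < v 0) :
    Real.sinh (Real.sqrt (-κ) / 2 * hypDist κ u v) =
      dist (qpt κ u) (qpt κ v) * (cfac κ u * cfac κ v) ∧ 0 ≤ hypDist κ u v := by
  set s : ℝ := Real.sqrt (-κ) with hs_def
  have hs0 : 0 < s := Real.sqrt_pos.2 (by linarith)
  have hs2 : s ^ 2 = -κ := Real.sq_sqrt (by linarith)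
  have hκ0 : κ ≠ 0 := hκ.ne
  have h1u : κ * (-(u 0 * u 0) + u 1 * u 1 + u 2 * u 2) = 1 := by
    have : κ * mink u u = 1 := by rw [hu]; field_simp
    simpa [mink] using this
  have h1v : κ * (-(v 0 * v 0) + v 1 * v 1 + v 2 * v 2) = 1 := by
    have : κ * mink v v = 1 := by rw [hv]; field_simp
    simpa [mink] using this
  have ha2 : (s * u 0) ^ 2 = 1 + (s * u 1) ^ 2 + (s * u 2) ^ 2 := by
    linear_combination (u 0 ^ 2 - u 1 ^ 2 - u 2 ^ 2) * hs2 + h1u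
  have hb2 : (s * v 0) ^ 2 = 1 + (s * v 1) ^ 2 + (s * v 2) ^ 2 := by
    linear_combination (v 0 ^ 2 - v 1 ^ 2 - v 2 ^ 2) * hs2 + h1v
  have ha0 : 0 < s * u 0 := mul_pos hs0 hu0
  have hb0 : 0 < s * v 0 := mul_pos hs0 hv0
  have ha1 : 1 ≤ s * u 0 := by
    nlinarith [ha2, sq_nonneg (s * u 1), sq_nonneg (s * u 2)]
  have hb1 : 1 ≤ s * v 0 := by
    nlinarith [hb2, sq_nonneg (s * v 1), sq_nonneg (s * v 2)]
  have hda : (0:ℝ) < 1 + s * u 0 := by linarith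
  have hdb : (0:ℝ) < 1 + s * v 0 := by linarith
  have ht_eq : κ * mink u v =
      (s * u 0) * (s * v 0) - (s * u 1) * (s * v 1) - (s * u 2) * (s * v 2) := by
    simp only [mink]
    linear_combination (-(u 0 * v 0) + u 1 * v 1 + u 2 * v 2) * hs2
  have hdist2 : dist (qpt κ u) (qpt κ v) ^ 2 * ((1 + s * u 0) * (1 + s * v 0)) =
      2 * (κ * mink u v - 1) := by
    rw [EuclideanSpace.dist_eq, Real.sq_sqrt (by positivity)]
    simp only [qpt, Fin.sum_univ_two, Matrix.cons_val_zero, Matrix.cons_val_one,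
      Matrix.head_cons, Real.dist_eq, sq_abs, ht_eq, ← hs_def]
    field_simp
    linear_combination (-((1 + s * v 0) ^ 2)) * ha2 + (-((1 + s * u 0) ^ 2)) * hb2
  have ht1 : 1 ≤ κ * mink u v := by
    nlinarith [hdist2, sq_nonneg (dist (qpt κ u) (qpt κ v)), mul_pos hda hdb,
      mul_nonneg (sq_nonneg (dist (qpt κ u) (qpt κ v))) (le_of_lt (mul_pos hda hdb))]
  have hd_nonneg : 0 ≤ hypDist κ u v := by
    rw [hypDist]
    have := arcosh_nonneg' ht1
    positivity
  refine ⟨?_, hd_nonneg⟩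
  have h_half : s / 2 * hypDist κ u v = arcosh (κ * mink u v) / 2 := by
    rw [hypDist, ← hs_def]
    field_simp
  rw [h_half, sinh_half_arcosh' ht1]
  have hcf : cfac κ u * cfac κ v =
      Real.sqrt ((1 + s * u 0) / 2 * ((1 + s * v 0) / 2)) := by
    rw [cfac, cfac, ← hs_def, ← Real.sqrt_mul (by linarith)]
  rw [hcf, ← Real.sqrt_sq dist_nonneg, ← Real.sqrt_mul (sq_nonneg _)]
  congr 1
  have h4 : (0:ℝ) < (1 + s * u 0) * (1 + s * v 0) := mul_pos hda hdb
  field_simp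
  linarith [hdist2]


/-- For four points in the hyperbolic plane of constant curvature `κ < 0` with
pairwise distances `d_{ij}`, if the smaller diagonal exceeds the largest side, then
`sinh((√(-κ)/2)·min(d₁₃, d₂₄)) ≤ √2 · sinh((√(-κ)/2)·max(d₁₂, d₂₃, d₃₄, d₄₁))`. -/
theorem hyperbolic_sinh_bound (κ : ℝ) (hκ : κ < 0) (p : Fin 4 → Fin 3 → ℝ)
    (hmem : ∀ i, mink (p i) (p i) = 1 / κ ∧ 0 < p i 0)
    (hlt : max (max (hypDist κ (p 0) (p 1)) (hypDist κ (p 1) (p 2)))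
        (max (hypDist κ (p 2) (p 3)) (hypDist κ (p 3) (p 0))) <
      min (hypDist κ (p 0) (p 2)) (hypDist κ (p 1) (p 3))) :
    Real.sinh (Real.sqrt (-κ) / 2 *
        min (hypDist κ (p 0) (p 2)) (hypDist κ (p 1) (p 3))) ≤
      Real.sqrt 2 *
        Real.sinh (Real.sqrt (-κ) / 2 *
          max (max (hypDist κ (p 0) (p 1)) (hypDist κ (p 1) (p 2)))
            (max (hypDist κ (p 2) (p 3)) (hypDist κ (p 3) (p 0)))) := by
  set s : ℝ := Real.sqrt (-κ) with hs_def
  have hs0 : 0 < s := Real.sqrt_pos.2 (by linarith)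
  have key : ∀ i j, Real.sinh (s / 2 * hypDist κ (p i) (p j)) =
      dist (qpt κ (p i)) (qpt κ (p j)) * (cfac κ (p i) * cfac κ (p j)) ∧
      0 ≤ hypDist κ (p i) (p j) := fun i j =>
    pair_key κ hκ (p i) (p j) (hmem i).1 (hmem i).2 (hmem j).1 (hmem j).2
  set D01 := hypDist κ (p 0) (p 1)
  set D12 := hypDist κ (p 1) (p 2)
  set D23 := hypDist κ (p 2) (p 3)
  set D30 := hypDist κ (p 3) (p 0)
  set D02 := hypDist κ (p 0) (p 2)
  set D13 := hypDist κ (p 1) (p 3)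
  set m := min D02 D13 with hm_def
  set M := max (max D01 D12) (max D23 D30) with hM_def
  have hMm : M < m := hlt
  have h01M : D01 ≤ M := le_max_of_le_left (le_max_left _ _)
  have h12M : D12 ≤ M := le_max_of_le_left (le_max_right _ _)
  have h23M : D23 ≤ M := le_max_of_le_right (le_max_left _ _)
  have h30M : D30 ≤ M := le_max_of_le_right (le_max_right _ _)
  have hM0 : 0 ≤ M := le_trans (key 0 1).2 h01M
  have hm0 : 0 ≤ m := le_of_lt (lt_of_le_of_lt hM0 hMm)
  have hmono : ∀ x y : ℝ, x ≤ y →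
      Real.sinh (s / 2 * x) ≤ Real.sinh (s / 2 * y) := fun x y hxy =>
    Real.sinh_le_sinh.2 (by nlinarith)
  have hSm0 : 0 ≤ Real.sinh (s / 2 * m) :=
    Real.sinh_nonneg_iff.2 (by positivity)
  have hSM0 : 0 ≤ Real.sinh (s / 2 * M) :=
    Real.sinh_nonneg_iff.2 (by positivity)
  -- the two diagonal sinh values dominate sinh of the min
  have hdiag : Real.sinh (s / 2 * m) ^ 2 ≤
      Real.sinh (s / 2 * D02) * Real.sinh (s / 2 * D13) := by
    have h1 := hmono m D02 (min_le_left _ _)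
    have h2 := hmono m D13 (min_le_right _ _)
    nlinarith [hSm0]
  -- Ptolemy
  have hptol : Real.sinh (s / 2 * D02) * Real.sinh (s / 2 * D13) ≤
      Real.sinh (s / 2 * D01) * Real.sinh (s / 2 * D23) +
      Real.sinh (s / 2 * D12) * Real.sinh (s / 2 * D30) := by
    rw [(key 0 2).1, (key 1 3).1, (key 0 1).1, (key 2 3).1, (key 1 2).1, (key 3 0).1]
    have hP := EuclideanGeometry.mul_dist_le_mul_dist_add_mul_dist
      (qpt κ (p 0)) (qpt κ (p 1)) (qpt κ (p 2)) (qpt κ (p 3))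
    rw [dist_comm (qpt κ (p 0)) (qpt κ (p 3))] at hP
    have hc : ∀ i, 0 ≤ cfac κ (p i) := fun i => Real.sqrt_nonneg _
    have hprod : 0 ≤ cfac κ (p 0) * cfac κ (p 1) * cfac κ (p 2) * cfac κ (p 3) := by
      have := hc 0; have := hc 1; have := hc 2; have := hc 3; positivity
    nlinarith [mul_le_mul_of_nonneg_right hP hprod]
  -- each side sinh is at most sinh of the max
  have hside : Real.sinh (s / 2 * D01) * Real.sinh (s / 2 * D23) +
      Real.sinh (s / 2 * D12) * Real.sinh (s / 2 * D30) ≤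
      2 * Real.sinh (s / 2 * M) ^ 2 := by
    have h1 := hmono D01 M h01M
    have h2 := hmono D12 M h12M
    have h3 := hmono D23 M h23M
    have h4 := hmono D30 M h30M
    have n1 : 0 ≤ Real.sinh (s / 2 * D01) := Real.sinh_nonneg_iff.2 (by
      have := (key 0 1).2; positivity)
    have n2 : 0 ≤ Real.sinh (s / 2 * D12) := Real.sinh_nonneg_iff.2 (by
      have := (key 1 2).2; positivity)
    have n3 : 0 ≤ Real.sinh (s / 2 * D23) := Real.sinh_nonneg_iff.2 (by
      have := (key 2 3).2; positivity)
    have n4 : 0 ≤ Real.sinh (s / 2 * D30) := Real.sinh_nonneg_iff.2 (by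
      have := (key 3 0).2; positivity)
    nlinarith [mul_le_mul h1 h3 n3 hSM0, mul_le_mul h2 h4 n4 hSM0]
  have hfin : Real.sinh (s / 2 * m) ^ 2 ≤ 2 * Real.sinh (s / 2 * M) ^ 2 :=
    le_trans hdiag (le_trans hptol hside)
  have hs2 : Real.sqrt 2 ^ 2 = 2 := Real.sq_sqrt (by norm_num)
  nlinarith [hfin, hSm0, hSM0, Real.sqrt_nonneg 2, hs2,
    sq_nonneg (Real.sinh (s / 2 * m) - Real.sqrt 2 * Real.sinh (s / 2 * M)),
    mul_nonneg (Real.sqrt_nonneg 2) hSM0]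
end

section
/- Let X = {x_1, x_2, x_3, x_4} be the four-point metric space with distances d(x_1,x_2) = a_1 + b + a_2, d(x_2,x_3) = a_2 + c + a_3, d(x_3,x_4) = a_3 + b + a_4, d(x_4,x_1) = a_4 + c + a_1, d(x_1,x_3) = a_1 + b + c + a_3, d(x_2,x_4) = a_2 + b + c + a_4, where a_1, a_2, a_3, a_4, b, c ≥ 0. Then t_d(X) − t_b(X) ≤ min(b, c). -/
/-- The largest distance from `x` to any point of `X`. -/
noncomputable def ptTd (X : Type*) [MetricSpace X] (x : X) : ℝ :=
  sSup (Set.range fun y => dist x y)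

/-- The second largest distance (counted with multiplicity over points) from `x`
to points of `X`. -/
noncomputable def ptTb (X : Type*) [MetricSpace X] (x : X) : ℝ :=
  sSup {r : ℝ | ∃ y z : X, y ≠ z ∧ r = min (dist x y) (dist x z)}

/-- `t_b(X) = max_{x ∈ X} t_b(x)`. -/
noncomputable def tbX (X : Type*) [MetricSpace X] : ℝ :=
  sSup (Set.range (ptTb X))

/-- `t_d(X) = min_{x ∈ X} t_d(x)`. -/
noncomputable def tdX (X : Type*) [MetricSpace X] : ℝ :=
  sInf (Set.range (ptTd X))

/-- Key arithmetic lemma. -/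
lemma hGraph_aux (a0 a1 a2 a3 b c td tb : ℝ) (hb : 0 ≤ b) (hc : 0 ≤ c)
    (h1 : a0 ≤ a1) (h3 : a0 ≤ a3)
    (ht : td ≤ a0 + b + a1 ∨ td ≤ a0 + b + c + a2 ∨ td ≤ a3 + c + a0)
    (hsA : ∀ t, t ≤ a0 + b + a1 → t ≤ a1 + b + c + a3 → t ≤ tb)
    (hsB : ∀ t, t ≤ a0 + b + c + a2 → t ≤ a1 + c + a2 → t ≤ tb)
    (hsC : ∀ t, t ≤ a3 + c + a0 → t ≤ a1 + b + c + a3 → t ≤ tb) :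
    td - tb ≤ b := by
  rcases ht with h | h | h
  · have := hsA (td - b) (by linarith) (by linarith); linarith
  · have := hsB (td - b) (by linarith) (by linarith); linarith
  · have := hsC (td - b) (by linarith) (by linarith); linarith

/-- For the four-point metric space `X = {x₀, x₁, x₂, x₃}` sitting in the `H`-graph
with pendant edge lengths `a i`, vertical sides `b`, and horizontal sides `c`,
one has `t_d(X) - t_b(X) ≤ min(b, c)`. -/
theorem hGraph_persistence_le_min {X : Type*} [MetricSpace X]
    (x : Fin 4 → X) (hx : Function.Bijective x)
    (a : Fin 4 → ℝ) (b c : ℝ) (ha : ∀ i, 0 ≤ a i) (hb : 0 ≤ b) (hc : 0 ≤ c)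
    (h01 : dist (x 0) (x 1) = a 0 + b + a 1)
    (h12 : dist (x 1) (x 2) = a 1 + c + a 2)
    (h23 : dist (x 2) (x 3) = a 2 + b + a 3)
    (h30 : dist (x 3) (x 0) = a 3 + c + a 0)
    (h02 : dist (x 0) (x 2) = a 0 + b + c + a 2)
    (h13 : dist (x 1) (x 3) = a 1 + b + c + a 3) :
    tdX X - tbX X ≤ min b c := by
  have hfin : Finite X := Finite.of_surjective x hx.2
  -- distance table, symmetric versions
  have h10 : dist (x 1) (x 0) = a 0 + b + a 1 := by rw [dist_comm]; exact h01
  have h21 : dist (x 2) (x 1) = a 1 + c + a 2 := by rw [dist_comm]; exact h12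
  have h32 : dist (x 3) (x 2) = a 2 + b + a 3 := by rw [dist_comm]; exact h23
  have h03 : dist (x 0) (x 3) = a 3 + c + a 0 := by rw [dist_comm]; exact h30
  have h20 : dist (x 2) (x 0) = a 0 + b + c + a 2 := by rw [dist_comm]; exact h02
  have h31 : dist (x 3) (x 1) = a 1 + b + c + a 3 := by rw [dist_comm]; exact h13
  -- tdX is at most ptTd at each point
  have htdle : ∀ i : Fin 4, tdX X ≤ ptTd X (x i) := by
    intro i
    refine csInf_le ?_ ⟨x i, rfl⟩
    exact (Set.finite_range _).bddBelow
  -- the key upper bound lemma for tdX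
  have htd3 : ∀ (i p q r : Fin 4) (A B C : ℝ),
      (∀ k : Fin 4, k = i ∨ k = p ∨ k = q ∨ k = r) →
      dist (x i) (x p) = A → dist (x i) (x q) = B → dist (x i) (x r) = C →
      tdX X ≤ A ∨ tdX X ≤ B ∨ tdX X ≤ C := by
    intro i p q r A B C hcov hA hB hC
    have hA0 : (0:ℝ) ≤ A := hA ▸ dist_nonneg
    have h0max : (0:ℝ) ≤ max (max A B) C :=
      (hA0.trans (le_max_left A B)).trans (le_max_left _ C)
    have hmax : tdX X ≤ max (max A B) C := by
      refine le_trans (htdle i) ?_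
      simp only [ptTd]
      refine Real.sSup_le ?_ h0max
      rintro rr ⟨y, rfl⟩
      obtain ⟨k, rfl⟩ := hx.2 y
      dsimp only
      rcases hcov k with rfl | rfl | rfl | rfl
      · rw [dist_self]; exact h0max
      · rw [hA]; exact (le_max_left A B).trans (le_max_left _ C)
      · rw [hB]; exact (le_max_right A B).trans (le_max_left _ C)
      · rw [hC]; exact le_max_right _ C
    rcases le_max_iff.mp hmax with h | h
    · rcases le_max_iff.mp h with h | h
      · exact Or.inl h
      · exact Or.inr (Or.inl h)
    · exact Or.inr (Or.inr h)
  -- lower bounds for tbX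
  have hptTbX : ∀ w : X, ptTb X w ≤ tbX X := by
    intro w
    refine le_csSup ?_ ⟨w, rfl⟩
    exact (Set.finite_range _).bddAbove
  have hminle : ∀ (j y z : Fin 4), y ≠ z →
      min (dist (x j) (x y)) (dist (x j) (x z)) ≤ tbX X := by
    intro j y z hne
    refine le_trans ?_ (hptTbX (x j))
    refine le_csSup ?_ ⟨x y, x z, fun h => hne (hx.1 h), rfl⟩
    have hsub : {r : ℝ | ∃ y z : X, y ≠ z ∧ r = min (dist (x j) y) (dist (x j) z)} ⊆
        Set.range (fun p : X × X => min (dist (x j) p.1) (dist (x j) p.2)) := by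
      rintro r ⟨y', z', _, rfl⟩
      exact ⟨(y', z'), rfl⟩
    exact (Set.Finite.subset (Set.finite_range _) hsub).bddAbove
  have hs : ∀ (j y z : Fin 4) (p q : ℝ), y ≠ z →
      dist (x j) (x y) = p → dist (x j) (x z) = q →
      ∀ t : ℝ, t ≤ p → t ≤ q → t ≤ tbX X := by
    intro j y z p q hne hp hq t h1 h2
    refine le_trans (le_min ?_ ?_) (hminle j y z hne)
    · rw [hp]; exact h1
    · rw [hq]; exact h2
  -- find the index with minimal pendant length
  obtain ⟨i, hi⟩ := Finite.exists_min a
  rcases le_total b c with hbc | hbc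
  · rw [min_eq_left hbc]
    fin_cases i
    · refine hGraph_aux (a 0) (a 1) (a 2) (a 3) b c (tdX X) (tbX X) hb hc
        (hi 1) (hi 3) ?_ ?_ ?_ ?_
      · exact htd3 0 1 2 3 _ _ _ (by decide) (by linarith) (by linarith) (by linarith)
      · exact hs 1 0 3 _ _ (by decide) (by linarith) (by linarith)
      · exact hs 2 0 1 _ _ (by decide) (by linarith) (by linarith)
      · exact hs 3 0 1 _ _ (by decide) (by linarith) (by linarith)
    · refine hGraph_aux (a 1) (a 0) (a 3) (a 2) b c (tdX X) (tbX X) hb hc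
        (hi 0) (hi 2) ?_ ?_ ?_ ?_
      · exact htd3 1 0 3 2 _ _ _ (by decide) (by linarith) (by linarith) (by linarith)
      · exact hs 0 1 2 _ _ (by decide) (by linarith) (by linarith)
      · exact hs 3 1 0 _ _ (by decide) (by linarith) (by linarith)
      · exact hs 2 1 0 _ _ (by decide) (by linarith) (by linarith)
    · refine hGraph_aux (a 2) (a 3) (a 0) (a 1) b c (tdX X) (tbX X) hb hc
        (hi 3) (hi 1) ?_ ?_ ?_ ?_
      · exact htd3 2 3 0 1 _ _ _ (by decide) (by linarith) (by linarith) (by linarith)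
      · exact hs 3 2 1 _ _ (by decide) (by linarith) (by linarith)
      · exact hs 0 2 3 _ _ (by decide) (by linarith) (by linarith)
      · exact hs 1 2 3 _ _ (by decide) (by linarith) (by linarith)
    · refine hGraph_aux (a 3) (a 2) (a 1) (a 0) b c (tdX X) (tbX X) hb hc
        (hi 2) (hi 0) ?_ ?_ ?_ ?_
      · exact htd3 3 2 1 0 _ _ _ (by decide) (by linarith) (by linarith) (by linarith)
      · exact hs 2 3 0 _ _ (by decide) (by linarith) (by linarith)
      · exact hs 1 3 2 _ _ (by decide) (by linarith) (by linarith)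
      · exact hs 0 3 2 _ _ (by decide) (by linarith) (by linarith)
  · rw [min_eq_right hbc]
    fin_cases i
    · refine hGraph_aux (a 0) (a 3) (a 2) (a 1) c b (tdX X) (tbX X) hc hb
        (hi 3) (hi 1) ?_ ?_ ?_ ?_
      · exact htd3 0 3 2 1 _ _ _ (by decide) (by linarith) (by linarith) (by linarith)
      · exact hs 3 0 1 _ _ (by decide) (by linarith) (by linarith)
      · exact hs 2 0 3 _ _ (by decide) (by linarith) (by linarith)
      · exact hs 1 0 3 _ _ (by decide) (by linarith) (by linarith)
    · refine hGraph_aux (a 1) (a 2) (a 3) (a 0) c b (tdX X) (tbX X) hc hb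
        (hi 2) (hi 0) ?_ ?_ ?_ ?_
      · exact htd3 1 2 3 0 _ _ _ (by decide) (by linarith) (by linarith) (by linarith)
      · exact hs 2 1 0 _ _ (by decide) (by linarith) (by linarith)
      · exact hs 3 1 2 _ _ (by decide) (by linarith) (by linarith)
      · exact hs 0 1 2 _ _ (by decide) (by linarith) (by linarith)
    · refine hGraph_aux (a 2) (a 1) (a 0) (a 3) c b (tdX X) (tbX X) hc hb
        (hi 1) (hi 3) ?_ ?_ ?_ ?_
      · exact htd3 2 1 0 3 _ _ _ (by decide) (by linarith) (by linarith) (by linarith)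
      · exact hs 1 2 3 _ _ (by decide) (by linarith) (by linarith)
      · exact hs 0 2 1 _ _ (by decide) (by linarith) (by linarith)
      · exact hs 3 2 1 _ _ (by decide) (by linarith) (by linarith)
    · refine hGraph_aux (a 3) (a 0) (a 1) (a 2) c b (tdX X) (tbX X) hc hb
        (hi 0) (hi 2) ?_ ?_ ?_ ?_
      · exact htd3 3 0 1 2 _ _ _ (by decide) (by linarith) (by linarith) (by linarith)
      · exact hs 0 3 2 _ _ (by decide) (by linarith) (by linarith)
      · exact hs 1 3 0 _ _ (by decide) (by linarith) (by linarith)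
      · exact hs 2 3 0 _ _ (by decide) (by linarith) (by linarith)
end
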